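/- If a is an element of a finite length Λ-module B and the height sequence (h(p^i a))_i of a has a gap after m_ℓ (i.e. h(p^{ℓ+1}a) > h(p^ℓ a)+1), then Λ/(p^{m_ℓ+1}) occurs as a direct summand of B. -/

import Mathlib

/-- `b` lies in `p^m B`, i.e. the height of `b` is at least `m`. -/
def inPow {Λ B : Type} [CommRing Λ] [AddCommGroup B] [Module Λ B]
    (p : Λ) (m : ℕ) (b : B) : Prop := ∃ c, b = p ^ m • c

/-- The height of `b` is exactly `m`: `b ∈ p^m B \ p^{m+1} B`. -/
def heightIs {Λ B : Type} [CommRing Λ] [AddCommGroup B] [Module Λ B]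
    (p : Λ) (b : B) (m : ℕ) : Prop := inPow p m b ∧ ¬ inPow p (m + 1) b

section aux

variable {Λ : Type} [CommRing Λ]

lemma inPow_equiv {B C : Type} [AddCommGroup B] [Module Λ B] [AddCommGroup C] [Module Λ C]
    (f : B ≃ₗ[Λ] C) (p : Λ) (k : ℕ) (b : B) : inPow p k b ↔ inPow p k (f b) := by
  constructor
  · rintro ⟨c, rfl⟩; exact ⟨f c, by simp⟩
  · rintro ⟨c, hc⟩
    refine ⟨f.symm c, f.injective ?_⟩
    simp [hc]

lemma inPow_pi {ι : Type} {M : ι → Type} [∀ i, AddCommGroup (M i)] [∀ i, Module Λ (M i)]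
    (p : Λ) (k : ℕ) (x : ∀ i, M i) : inPow p k x ↔ ∀ i, inPow p k (x i) := by
  constructor
  · rintro ⟨c, rfl⟩ i; exact ⟨c i, rfl⟩
  · intro h
    choose c hc using h
    exact ⟨c, funext hc⟩

lemma inPow_quot (p : Λ) (k e : ℕ) (x : Λ) :
    inPow p k (Submodule.Quotient.mk x : Λ ⧸ Ideal.span {p ^ e}) ↔
      x ∈ Ideal.span {p ^ k} ⊔ Ideal.span {p ^ e} := by
  constructor
  · rintro ⟨c, hc⟩
    obtain ⟨y, rfl⟩ := Submodule.Quotient.mk_surjective _ c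
    rw [← Submodule.Quotient.mk_smul, Submodule.Quotient.eq] at hc
    have h1 : p ^ k • y ∈ Ideal.span {p ^ k} := by
      rw [smul_eq_mul]
      exact Ideal.mem_span_singleton.2 ⟨y, rfl⟩
    have : x = p ^ k • y + (x - p ^ k • y) := by ring
    rw [this]
    exact Submodule.add_mem _ (Submodule.mem_sup_left h1) (Submodule.mem_sup_right hc)
  · intro hx
    obtain ⟨u, hu, v, hv, rfl⟩ := Submodule.mem_sup.1 hx
    obtain ⟨z, rfl⟩ := Ideal.mem_span_singleton.1 hu
    refine ⟨Submodule.Quotient.mk z, ?_⟩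
    rw [← Submodule.Quotient.mk_smul, Submodule.Quotient.eq, smul_eq_mul]
    simpa using hv

lemma span_pow_sup_of_le [IsDomain Λ] (p : Λ) {k e : ℕ} (h : k ≤ e) :
    Ideal.span {p ^ k} ⊔ Ideal.span {p ^ e} = Ideal.span {p ^ k} :=
  sup_eq_left.2 (Ideal.span_singleton_le_span_singleton.2 (pow_dvd_pow p h))

end aux

/-- Kaplansky's Lemma 22: if the height sequence of `a ∈ B` has a gap after
`m_ℓ = h(p^ℓ a)` (i.e. `h(p^{ℓ+1} a) > m_ℓ + 1`, which includes the case
`p^{ℓ+1} a = 0`), then `Λ/(p^{m_ℓ+1})` occurs as a direct summand of `B`. -/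
theorem stmt1 (Λ : Type) [CommRing Λ] [IsDomain Λ] [IsDiscreteValuationRing Λ]
    (p : Λ) (hp : Irreducible p)
    (B : Type) [AddCommGroup B] [Module Λ B] [Module.Finite Λ B]
    (htor : Module.IsTorsion Λ B)
    (a : B) (ℓ m : ℕ)
    (h1 : heightIs p (p ^ ℓ • a) m)
    (h2 : inPow p (m + 2) (p ^ (ℓ + 1) • a)) :
    ∃ N N' : Submodule Λ B, IsCompl N N' ∧
      Nonempty (N ≃ₗ[Λ] Λ ⧸ Ideal.span {p ^ (m + 1)}) := by
  classical
  obtain ⟨ι, hι, q, hq, e, ⟨f0⟩⟩ := Module.equiv_directSum_of_isTorsion htor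
  have hspan : ∀ i, (Λ ∙ q i ^ e i) = Ideal.span {p ^ e i} := by
    intro i
    exact Ideal.span_singleton_eq_span_singleton.2
      (IsDiscreteValuationRing.associated_of_irreducible Λ (hq i) hp).pow_pow
  set M : ι → Type := fun i => Λ ⧸ Ideal.span {p ^ e i} with hM
  let f : B ≃ₗ[Λ] ∀ i, M i :=
    f0.trans ((DirectSum.linearEquivFunOnFintype Λ ι _).trans
      (LinearEquiv.piCongrRight fun i => Submodule.quotEquivOfEq _ _ (hspan i)))
  set b : B := p ^ ℓ • a with hb
  have hxm : ∀ i, inPow p m (f b i) := (inPow_pi _ _ _).1 ((inPow_equiv f p m b).1 h1.1)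
  have hxm1 : ∃ i, ¬ inPow p (m + 1) (f b i) := by
    by_contra h
    push_neg at h
    exact h1.2 ((inPow_equiv f p (m + 1) b).2 ((inPow_pi _ _ _).2 h))
  obtain ⟨i, hi⟩ := hxm1
  have hpb : inPow p (m + 2) (p • b) := by
    have h' : p ^ (ℓ + 1) • a = p • b := by rw [hb, pow_succ', mul_smul]
    rwa [h'] at h2
  have hxp : inPow p (m + 2) (f (p • b) i) :=
    (inPow_pi _ _ _).1 ((inPow_equiv f p (m + 2) _).1 hpb) i
  have hfpb : f (p • b) i = p • f b i := by rw [map_smul]; rfl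
  rw [hfpb] at hxp
  -- pick a representative of the `i`-th component
  obtain ⟨y, hy⟩ := Submodule.Quotient.mk_surjective _ (f b i)
  have hA : y ∈ Ideal.span {p ^ m} ⊔ Ideal.span {p ^ e i} := (inPow_quot p m (e i) y).1 (hy ▸ hxm i)
  have hB : ¬ (y ∈ Ideal.span {p ^ (m + 1)} ⊔ Ideal.span {p ^ e i}) :=
    fun h => hi (hy ▸ (inPow_quot p (m + 1) (e i) y).2 h)
  have hC : p * y ∈ Ideal.span {p ^ (m + 2)} ⊔ Ideal.span {p ^ e i} := by
    have : (Submodule.Quotient.mk (p * y) : Λ ⧸ Ideal.span {p ^ e i}) = p • f b i := by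
      rw [← hy, ← Submodule.Quotient.mk_smul, smul_eq_mul]
    exact (inPow_quot p (m + 2) (e i) (p * y)).1 (by rw [this]; exact hxp)
  -- show e i = m + 1
  have hm1le : m + 1 ≤ e i := by
    by_contra h
    push_neg at h
    have he : e i ≤ m := Nat.lt_succ_iff.1 h
    rw [sup_eq_right.2 (Ideal.span_singleton_le_span_singleton.2 (pow_dvd_pow p he))] at hA
    exact hB (Submodule.mem_sup_right hA)
  rw [span_pow_sup_of_le p (by omega : m ≤ e i)] at hA
  rw [span_pow_sup_of_le p hm1le] at hB
  obtain ⟨u, hu⟩ := Ideal.mem_span_singleton.1 hA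
  have hpu : ¬ p ∣ u := by
    rintro ⟨v, rfl⟩
    exact hB (Ideal.mem_span_singleton.2 ⟨v, by rw [hu]; ring⟩)
  have hei : e i = m + 1 := by
    by_contra h
    have hle : m + 2 ≤ e i := by omega
    rw [span_pow_sup_of_le p hle] at hC
    obtain ⟨z, hz⟩ := Ideal.mem_span_singleton.1 hC
    apply hpu
    refine ⟨z, ?_⟩
    have hcancel : p ^ (m + 1) * u = p ^ (m + 1) * (p * z) := by
      rw [hu] at hz
      calc p ^ (m + 1) * u = p * (p ^ m * u) := by ring
        _ = p ^ (m + 2) * z := hz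
        _ = p ^ (m + 1) * (p * z) := by ring
    exact mul_left_cancel₀ (pow_ne_zero _ hp.ne_zero) hcancel
  -- construct the complementary submodules
  let S : Submodule Λ (∀ i, M i) := LinearMap.range (LinearMap.single Λ M i)
  let T : Submodule Λ (∀ i, M i) := LinearMap.ker (LinearMap.proj (R := Λ) (φ := M) i)
  have hST : IsCompl S T := by
    constructor
    · rw [disjoint_iff_inf_le]
      rintro x ⟨⟨y, rfl⟩, hx⟩
      have hy0 : y = 0 := by
        have := LinearMap.mem_ker.1 hx
        simpa [LinearMap.proj_apply, LinearMap.single_apply] using this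
      simp [hy0]
    · rw [codisjoint_iff_le_sup]
      intro x _
      have hxeq : x = LinearMap.single Λ M i (x i) + (x - LinearMap.single Λ M i (x i)) := by
        abel
      rw [hxeq]
      refine Submodule.add_mem_sup ⟨x i, rfl⟩ ?_
      refine LinearMap.mem_ker.2 ?_
      simp [LinearMap.proj_apply, LinearMap.single_apply]
  refine ⟨S.map (f.symm : (∀ i, M i) →ₗ[Λ] B), T.map (f.symm : (∀ i, M i) →ₗ[Λ] B), ?_, ?_⟩
  · have h := (Submodule.orderIsoMapComap (f.symm : (∀ i, M i) ≃ₗ[Λ] B)).isCompl hST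
    exact h
  · have e1 : (S : Submodule Λ (∀ i, M i)) ≃ₗ[Λ]
        ↥(S.map (f.symm : (∀ i, M i) →ₗ[Λ] B)) := f.symm.submoduleMap S
    have e2 : (S : Submodule Λ (∀ i, M i)) ≃ₗ[Λ] M i :=
      (LinearEquiv.ofInjective (LinearMap.single Λ M i) (Pi.single_injective (M := M) i)).symm
    have e3 : M i ≃ₗ[Λ] Λ ⧸ Ideal.span {p ^ (m + 1)} :=
      Submodule.quotEquivOfEq _ _ (by rw [hei])
    exact ⟨e1.symm ≪≫ₗ e2 ≪≫ₗ e3⟩
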